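/- Let P be a polynomial in two variables with real coefficients satisfying the reduced graviton factorization constraint. Then P is a constant polynomial. -/

import Mathlib

/-- Evaluation of a two-variable real polynomial at `(x, y)`. -/
noncomputable def ev (P : MvPolynomial (Fin 2) ℝ) (x y : ℝ) : ℝ :=
  MvPolynomial.eval ![x, y] P

/-- The reduced graviton factorization constraint for a two-variable polynomial `P`. -/
def GravitonConstraint (P : MvPolynomial (Fin 2) ℝ) : Prop :=
  ∀ E1 E2 E3 E4 : ℝ, E1 + E2 + E3 + E4 = 0 →
    (ev P (E1 + E3) (E1 * E3) * ev P (E2 + E4) (E2 * E4) =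
      ev P (-E2) (-E1 * (E1 + E2)) * ev P (-E3) (-E4 * (E3 + E4))) ∧
    (ev P (-E2) (-E1 * (E1 + E2)) * ev P (-E3) (-E4 * (E3 + E4)) =
      ev P (-E4) (-E1 * (E1 + E4)) * ev P (-E3) (-E2 * (E2 + E3)))

open Polynomial in
lemma ev_aeval (P : MvPolynomial (Fin 2) ℝ) (f : Fin 2 → ℝ[X]) (x : ℝ) :
    Polynomial.eval x (MvPolynomial.aeval f P)
      = MvPolynomial.eval ![(f 0).eval x, (f 1).eval x] P := by
  rw [← Polynomial.coe_aeval_eq_eval, MvPolynomial.comp_aeval_apply]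
  have h2 : ∀ (g : Fin 2 → ℝ) (Q : MvPolynomial (Fin 2) ℝ),
      MvPolynomial.aeval g Q = MvPolynomial.eval g Q := fun g Q =>
    DFunLike.congr_fun (MvPolynomial.coe_aeval_eq_eval g) Q
  rw [h2]
  have h3 : (fun i => (aeval x) (f i)) = ![(f 0).eval x, (f 1).eval x] := by
    funext i
    fin_cases i <;> simp [Polynomial.coe_aeval_eq_eval]
  rw [h3]
  simp [Polynomial.coe_aeval_eq_eval]

/-- If a polynomial takes the value `u` at infinitely many second coordinates on a
vertical line, it equals `u` on the whole line. -/
lemma section_const (P : MvPolynomial (Fin 2) ℝ) (s u : ℝ)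
    (h : ∀ n : ℕ, ev P s (s ^ 2 / 4 - (n : ℝ) ^ 2) = u) : ∀ p : ℝ, ev P s p = u := by
  intro p
  set q : Polynomial ℝ :=
    MvPolynomial.aeval ![Polynomial.C s, Polynomial.X] P - Polynomial.C u with hqdef
  have hinj : Function.Injective (fun n : ℕ => s ^ 2 / 4 - (n : ℝ) ^ 2) := by
    intro m n hmn
    simp only at hmn
    have h1 : ((m ^ 2 : ℕ) : ℝ) = ((n ^ 2 : ℕ) : ℝ) := by push_cast; linarith
    have h2 : m ^ 2 = n ^ 2 := Nat.cast_injective h1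
    exact Nat.pow_left_injective (by norm_num) h2
  have hq0 : q = 0 := by
    apply Polynomial.eq_zero_of_infinite_isRoot
    apply (Set.infinite_range_of_injective hinj).mono
    rintro x ⟨n, rfl⟩
    show q.IsRoot _
    rw [hqdef, Polynomial.IsRoot, Polynomial.eval_sub, Polynomial.eval_C, ev_aeval]
    simp only [Matrix.cons_val_zero, Matrix.cons_val_one, Matrix.head_cons,
      Polynomial.eval_C, Polynomial.eval_X]
    have := h n
    rw [ev] at this
    rw [this]
    ring
  have := congrArg (Polynomial.eval p) hq0
  rw [hqdef] at this
  simp only [Polynomial.eval_sub, Polynomial.eval_C, ev_aeval, Polynomial.eval_zero,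
    Matrix.cons_val_zero, Matrix.cons_val_one, Matrix.head_cons,
    Polynomial.eval_X, sub_eq_zero] at this
  exact this

lemma ev_funext {P : MvPolynomial (Fin 2) ℝ} {c : ℝ} (h : ∀ x y : ℝ, ev P x y = c) :
    P = MvPolynomial.C c := by
  apply MvPolynomial.funext
  intro v
  have hv : v = ![v 0, v 1] := by funext i; fin_cases i <;> rfl
  rw [MvPolynomial.eval_C, hv]
  exact h (v 0) (v 1)

open Polynomial in
theorem stmt_3 (P : MvPolynomial (Fin 2) ℝ) (h : GravitonConstraint P) :
    ∃ c : ℝ, P = MvPolynomial.C c := by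
  simp only [GravitonConstraint, ev] at h
  -- Instance (i): at (x, -x, 0, 0)
  have h1 : ∀ x : ℝ, MvPolynomial.eval ![x, 0] P * MvPolynomial.eval ![(-x), 0] P
      = MvPolynomial.eval ![x, 0] P * MvPolynomial.eval ![0, 0] P := by
    intro x
    have := (h x (-x) 0 0 (by ring)).1
    simpa using this
  -- Instance (ii): at (a, b, -b, -a)
  have h2 : ∀ a b : ℝ, MvPolynomial.eval ![(-b), (-(a * (a + b)))] P
      * MvPolynomial.eval ![b, (-(a * (a + b)))] P
      = MvPolynomial.eval ![a, 0] P * MvPolynomial.eval ![b, 0] P := by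
    intro a b
    have := (h a b (-b) (-a) (by ring)).2
    ring_nf at this ⊢
    convert this using 4
  -- The two composed one-variable polynomials, for a fixed b.
  set F : ℝ → (Fin 2 → ℝ[X]) := fun b => ![Polynomial.C (-b),
    -(Polynomial.X * (Polynomial.X + Polynomial.C b))] with hF
  set G : ℝ → (Fin 2 → ℝ[X]) := fun b => ![Polynomial.C b,
    -(Polynomial.X * (Polynomial.X + Polynomial.C b))] with hG
  have hFeval : ∀ b a : ℝ, Polynomial.eval a (MvPolynomial.aeval (F b) P)
      = MvPolynomial.eval ![(-b), (-(a * (a + b)))] P := by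
    intro b a
    rw [ev_aeval]
    simp [hF]
  have hGeval : ∀ b a : ℝ, Polynomial.eval a (MvPolynomial.aeval (G b) P)
      = MvPolynomial.eval ![b, (-(a * (a + b)))] P := by
    intro b a
    rw [ev_aeval]
    simp [hG]
  by_cases hA : ∀ x : ℝ, MvPolynomial.eval ![x, 0] P = 0
  · -- Degenerate case: P vanishes on the first axis; then P = 0.
    refine ⟨0, ?_⟩
    have hz : ∀ b : ℝ, (∀ p, ev P (-b) p = 0) ∨ (∀ p, ev P b p = 0) := by
      intro b
      have hUV : (MvPolynomial.aeval (F b) P) * (MvPolynomial.aeval (G b) P) = 0 := by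
        apply Polynomial.funext
        intro r
        rw [Polynomial.eval_mul, hFeval, hGeval, h2 r b, hA r, Polynomial.eval_zero, zero_mul]
      rcases mul_eq_zero.mp hUV with h0 | h0
      · left
        apply section_const
        intro n
        have := congrArg (Polynomial.eval ((n : ℝ) - b / 2)) h0
        rw [hFeval, Polynomial.eval_zero] at this
        rw [ev, show (-b) ^ 2 / 4 - (n : ℝ) ^ 2
          = -((((n : ℝ) - b / 2)) * ((((n : ℝ) - b / 2)) + b)) by ring]
        exact this
      · right
        apply section_const
        intro n
        have := congrArg (Polynomial.eval ((n : ℝ) - b / 2)) h0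
        rw [hGeval, Polynomial.eval_zero] at this
        rw [ev, show b ^ 2 / 4 - (n : ℝ) ^ 2
          = -((((n : ℝ) - b / 2)) * ((((n : ℝ) - b / 2)) + b)) by ring]
        exact this
    set T : Set ℝ := {t : ℝ | ∀ p, ev P t p = 0} with hT
    have hTinf : T.Infinite := by
      intro hfin
      have hsub : (Set.univ : Set ℝ) ⊆ T ∪ (Neg.neg '' T) := by
        intro x _
        rcases hz x with hx | hx
        · right
          exact ⟨-x, hx, by ring⟩
        · left
          exact hx
      exact Set.infinite_univ ((hfin.union (hfin.image _)).subset hsub)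
    have hzero : ∀ x y : ℝ, ev P x y = 0 := by
      intro x y
      have hW : (MvPolynomial.aeval ![Polynomial.X, Polynomial.C y] P) = 0 := by
        apply Polynomial.eq_zero_of_infinite_isRoot
        apply hTinf.mono
        intro t ht
        show Polynomial.IsRoot _ t
        rw [Polynomial.IsRoot, ev_aeval]
        simpa [ev] using ht y
      have := congrArg (Polynomial.eval x) hW
      rw [ev_aeval, Polynomial.eval_zero] at this
      rw [ev]
      simpa using this
    exact ev_funext hzero
  · -- Main case: P is a nonzero constant c₀ on the first axis.
    push_neg at hA
    obtain ⟨x₀, hx₀⟩ := hA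
    set c₀ : ℝ := MvPolynomial.eval ![0, 0] P with hc₀
    -- the univariate restrictions to the axis
    have hAxis : ∀ x : ℝ, MvPolynomial.eval ![x, 0] P = c₀ := by
      have hprod : (MvPolynomial.aeval ![Polynomial.X, 0] P) *
          (MvPolynomial.aeval ![-Polynomial.X, 0] P - Polynomial.C c₀) = 0 := by
        apply Polynomial.funext
        intro r
        rw [Polynomial.eval_mul, Polynomial.eval_sub, Polynomial.eval_C, ev_aeval, ev_aeval,
          Polynomial.eval_zero]
        simp only [Matrix.cons_val_zero, Matrix.cons_val_one, Matrix.head_cons,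
          Polynomial.eval_X, Polynomial.eval_neg, Polynomial.eval_zero]
        have := h1 r
        ring_nf
        ring_nf at this
        linarith
      rcases mul_eq_zero.mp hprod with h0 | h0
      · exfalso
        apply hx₀
        have := congrArg (Polynomial.eval x₀) h0
        rw [ev_aeval, Polynomial.eval_zero] at this
        simpa using this
      · intro x
        have := congrArg (Polynomial.eval (-x)) (sub_eq_zero.mp h0)
        rw [ev_aeval, Polynomial.eval_C] at this
        simpa using this
    have hc₀ne : c₀ ≠ 0 := by
      rw [← hAxis x₀]
      exact hx₀
    refine ⟨c₀, ?_⟩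
    apply ev_funext
    -- show that each U_b is a unit, hence constant equal to c₀
    have hUconst : ∀ b a : ℝ, MvPolynomial.eval ![(-b), (-(a * (a + b)))] P = c₀ := by
      intro b a
      have hUV : (MvPolynomial.aeval (F b) P) * (MvPolynomial.aeval (G b) P)
          = Polynomial.C (c₀ * c₀) := by
        apply Polynomial.funext
        intro r
        rw [Polynomial.eval_mul, hFeval, hGeval, h2 r b, hAxis r, hAxis b, Polynomial.eval_C]
      have hunit : IsUnit (MvPolynomial.aeval (F b) P) := by
        apply IsUnit.of_mul_eq_one ((MvPolynomial.aeval (G b) P) *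
          Polynomial.C (c₀ * c₀)⁻¹)
        rw [← mul_assoc, hUV, ← Polynomial.C_mul,
          mul_inv_cancel₀ (mul_ne_zero hc₀ne hc₀ne), Polynomial.C_1]
      have hdeg := Polynomial.isUnit_iff_degree_eq_zero.mp hunit
      have hCform := Polynomial.eq_C_of_degree_le_zero (le_of_eq hdeg)
      have heval : ∀ r : ℝ, Polynomial.eval r (MvPolynomial.aeval (F b) P)
          = Polynomial.eval 0 (MvPolynomial.aeval (F b) P) := by
        intro r
        rw [hCform]
        simp
      have h0eval : Polynomial.eval 0 (MvPolynomial.aeval (F b) P) = c₀ := by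
        rw [hFeval]
        rw [show -((0 : ℝ) * ((0 : ℝ) + b)) = 0 by ring]
        exact hAxis (-b)
      rw [← hFeval b a, heval a, h0eval]
    intro x y
    -- for each s, infinitely many values give c₀
    have : ∀ p : ℝ, ev P x p = c₀ := by
      apply section_const
      intro n
      have := hUconst (-x) ((n : ℝ) + x / 2)
      rw [neg_neg] at this
      rw [ev, show x ^ 2 / 4 - (n : ℝ) ^ 2
        = -((((n : ℝ) + x / 2)) * ((((n : ℝ) + x / 2)) + -x)) by ring]
      exact this
    exact this y
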